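/- For every generator x of a grid diagram of size N, M(x) is an integer. Moreover M is invariant under cyclic translation of the diagram: for every (s,t) ∈ (ℤ/N)², if σ′_O(i) = σ_O(i − s) + t, σ′_X(i) = σ_X(i − s) + t, and x′(i) = x(i − s) + t denote the translated diagram and generator, then the value of M for x′ computed in the diagram (σ′_O, σ′_X) equals the value of M for x computed in (σ_O, σ_X). -/

import Mathlib

/-- A generator of a grid diagram of size `N`: a permutation of `ℤ/N`. -/
abbrev GridGen (N : ℕ) := Equiv.Perm (ZMod N)

/-- The alternating corner sum of a 2-chain `D` at the lattice point `(a, b)`. -/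
def cornerSum (N : ℕ) (D : ZMod N → ZMod N → ℤ) (a b : ZMod N) : ℤ :=
  D a b - D (a - 1) b - D a (b - 1) + D (a - 1) (b - 1)

/-- `D` is a domain from the generator `x` to the generator `y`: the alternating
corner sum at a lattice point `p` is `1` if `p ∈ x \ y`, `-1` if `p ∈ y \ x`, and
`0` otherwise. -/
def IsGridDomain (N : ℕ) (x y : GridGen N) (D : ZMod N → ZMod N → ℤ) : Prop :=
  ∀ a b : ZMod N, cornerSum N D a b =
    if x a = b ∧ y a ≠ b then 1 else if y a = b ∧ x a ≠ b then -1 else 0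

/-- The point measure `n_p(D)` at the lattice point `p = (a, b)`: the average of
the values of `D` on the four squares around `p`. -/
def gridNp (N : ℕ) (D : ZMod N → ZMod N → ℤ) (a b : ZMod N) : ℚ :=
  ((D a b : ℚ) + (D (a - 1) b : ℚ) + (D a (b - 1) : ℚ) + (D (a - 1) (b - 1) : ℚ)) / 4

/-- The Maslov index `μ(D) = Σ_i (n_{(i, x i)}(D) + n_{(i, y i)}(D))`. -/
def maslovIndex (N : ℕ) [NeZero N] (x y : GridGen N) (D : ZMod N → ZMod N → ℤ) : ℚ :=
  ∑ i : ZMod N, (gridNp N D i (x i) + gridNp N D i (y i))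
/-- `J(a, b) = 1/2` if `(a₁ - b₁)(a₂ - b₂) > 0` and `0` otherwise. -/
noncomputable def Jpt (p q : ℝ × ℝ) : ℚ :=
  if 0 < (p.1 - q.1) * (p.2 - q.2) then 1 / 2 else 0

/-- The planar point corresponding to a coordinate `(i, b)` of a generator,
representing `ℤ/N` by `{0, 1, …, N-1} ⊂ ℝ`. -/
noncomputable def genPt (N : ℕ) (i b : ZMod N) : ℝ × ℝ :=
  ((ZMod.val i : ℝ), (ZMod.val b : ℝ))

/-- The planar point of the marking in column `i` determined by the permutation
`σ`: the centre `(i + 1/2, σ i + 1/2)` of the square `(i, σ i)`. -/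
noncomputable def markPt (N : ℕ) (σ : GridGen N) (i : ZMod N) : ℝ × ℝ :=
  ((ZMod.val i : ℝ) + 1 / 2, (ZMod.val (σ i) : ℝ) + 1 / 2)

/-- The absolute Maslov grading `M(x) = J(x - 𝕆, x - 𝕆) + 1`, with `J` extended
bilinearly to formal sums of points. -/
noncomputable def MaslovGrading (N : ℕ) [NeZero N] (σO : GridGen N) (x : GridGen N) : ℚ :=
  (∑ i : ZMod N, ∑ j : ZMod N,
      (Jpt (genPt N i (x i)) (genPt N j (x j)) - Jpt (genPt N i (x i)) (markPt N σO j) -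
        Jpt (markPt N σO i) (genPt N j (x j)) + Jpt (markPt N σO i) (markPt N σO j))) + 1

/-- The absolute Alexander grading
`A(x) = J(x - (𝕏 + 𝕆)/2, 𝕏 - 𝕆) - (N - 1)/2`, with `J` extended bilinearly to
formal sums of points. -/
noncomputable def AlexGrading (N : ℕ) [NeZero N] (σO σX : GridGen N) (x : GridGen N) : ℚ :=
  (∑ i : ZMod N, ∑ j : ZMod N,
      (Jpt (genPt N i (x i)) (markPt N σX j) - Jpt (genPt N i (x i)) (markPt N σO j) -
        (1 / 2) * Jpt (markPt N σX i) (markPt N σX j) +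
        (1 / 2) * Jpt (markPt N σX i) (markPt N σO j) -
        (1 / 2) * Jpt (markPt N σO i) (markPt N σX j) +
        (1 / 2) * Jpt (markPt N σO i) (markPt N σO j))) - ((N : ℚ) - 1) / 2

namespace GridAux

set_option linter.unusedSectionVars false

def jj (p q r s : ℕ) : ℚ := if (q < p ∧ s < r) ∨ (p < q ∧ r < s) then 1/2 else 0
def jg (p q r s : ℕ) : ℚ := if (q < p ∧ s < r) ∨ (p ≤ q ∧ r ≤ s) then 1/2 else 0

lemma jj_comm (p q r s : ℕ) : jj p q r s = jj q p s r := by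
  unfold jj; exact if_congr or_comm rfl rfl
lemma jj_swap (p q r s : ℕ) : jj p q r s = jj r s p q := by
  unfold jj; exact if_congr (by tauto) rfl rfl
lemma jg_swap (p q r s : ℕ) : jg p q r s = jg r s p q := by
  unfold jg; exact if_congr (by tauto) rfl rfl
lemma jj_diag (p r s : ℕ) : jj p p r s = 0 := by
  unfold jj; rw [if_neg]; omega
lemma jj_two (p q r s : ℕ) : ∃ k : ℤ, jj p q r s + jj p q r s = (k:ℚ) := by
  unfold jj; split_ifs
  · exact ⟨1, by norm_num⟩
  · exact ⟨0, by norm_num⟩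
lemma jg_two (p q r s : ℕ) : ∃ k : ℤ, jg p q r s + jg p q r s = (k:ℚ) := by
  unfold jg; split_ifs
  · exact ⟨1, by norm_num⟩
  · exact ⟨0, by norm_num⟩

variable {N : ℕ} [NeZero N]

/-! ### real comparison lemmas -/

lemma cast_sub_pos (p q : ℕ) : (0:ℝ) < (p:ℝ) - (q:ℝ) ↔ q < p := by
  rw [sub_pos, Nat.cast_lt]
lemma cast_sub_neg (p q : ℕ) : (p:ℝ) - (q:ℝ) < 0 ↔ p < q := by
  rw [sub_neg, Nat.cast_lt]
lemma half_pos_iff (p q : ℕ) : (0:ℝ) < (p:ℝ) - ((q:ℝ) + 1/2) ↔ q < p := by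
  constructor
  · intro h; by_contra hq; push_neg at hq
    have : (p:ℝ) ≤ (q:ℝ) := Nat.cast_le.2 hq; linarith
  · intro h; have : ((q+1:ℕ):ℝ) ≤ (p:ℝ) := Nat.cast_le.2 h; push_cast at this; linarith
lemma half_neg_iff (p q : ℕ) : (p:ℝ) - ((q:ℝ) + 1/2) < 0 ↔ p ≤ q := by
  constructor
  · intro h; by_contra hq; push_neg at hq
    have : ((q+1:ℕ):ℝ) ≤ (p:ℝ) := Nat.cast_le.2 hq; push_cast at this; linarith
  · intro h; have : (p:ℝ) ≤ (q:ℝ) := Nat.cast_le.2 h; linarith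
lemma half_pos_iff' (p q : ℕ) : (0:ℝ) < ((p:ℝ) + 1/2) - (q:ℝ) ↔ q ≤ p := by
  constructor
  · intro h; by_contra hq; push_neg at hq
    have : ((p+1:ℕ):ℝ) ≤ (q:ℝ) := Nat.cast_le.2 hq; push_cast at this; linarith
  · intro h; have : (q:ℝ) ≤ (p:ℝ) := Nat.cast_le.2 h; linarith
lemma half_neg_iff' (p q : ℕ) : ((p:ℝ) + 1/2) - (q:ℝ) < 0 ↔ p < q := by
  constructor
  · intro h; by_contra hq; push_neg at hq
    have : (q:ℝ) ≤ (p:ℝ) := Nat.cast_le.2 hq; linarith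
  · intro h; have : ((p+1:ℕ):ℝ) ≤ (q:ℝ) := Nat.cast_le.2 h; push_cast at this; linarith
lemma halfhalf_pos_iff (p q : ℕ) : (0:ℝ) < ((p:ℝ) + 1/2) - ((q:ℝ) + 1/2) ↔ q < p := by
  rw [show ((p:ℝ) + 1/2) - ((q:ℝ) + 1/2) = (p:ℝ) - (q:ℝ) by ring, cast_sub_pos]
lemma halfhalf_neg_iff (p q : ℕ) : ((p:ℝ) + 1/2) - ((q:ℝ) + 1/2) < 0 ↔ p < q := by
  rw [show ((p:ℝ) + 1/2) - ((q:ℝ) + 1/2) = (p:ℝ) - (q:ℝ) by ring, cast_sub_neg]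

/-! ### Jpt reductions -/

lemma Jpt_gen_gen (i b j c : ZMod N) :
    Jpt (genPt N i b) (genPt N j c) = jj i.val j.val b.val c.val := by
  unfold Jpt genPt jj
  simp only [mul_pos_iff, cast_sub_pos, cast_sub_neg]
lemma Jpt_gen_mark (σ : Equiv.Perm (ZMod N)) (i b j : ZMod N) :
    Jpt (genPt N i b) (markPt N σ j) = jg i.val j.val b.val (σ j).val := by
  unfold Jpt genPt markPt jg
  simp only [mul_pos_iff, half_pos_iff, half_neg_iff]
lemma Jpt_mark_gen (σ : Equiv.Perm (ZMod N)) (i j c : ZMod N) :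
    Jpt (markPt N σ i) (genPt N j c) = jg j.val i.val c.val (σ i).val := by
  unfold Jpt genPt markPt jg
  simp only [mul_pos_iff, half_pos_iff', half_neg_iff']
  exact if_congr (by tauto) rfl rfl
lemma Jpt_mark_mark (σ τ : Equiv.Perm (ZMod N)) (i j : ZMod N) :
    Jpt (markPt N σ i) (markPt N τ j) = jj i.val j.val (σ i).val (τ j).val := by
  unfold Jpt markPt jj
  simp only [mul_pos_iff, halfhalf_pos_iff, halfhalf_neg_iff]

/-! ### counting -/

lemma sum_val_eq (f : ℕ → ℚ) :
    ∑ j : ZMod N, f (ZMod.val j) = ∑ k ∈ Finset.range N, f k := by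
  apply Finset.sum_bij' (fun (j : ZMod N) _ => ZMod.val j) (fun (k : ℕ) _ => (k : ZMod N))
  · intro a _; exact Finset.mem_range.2 (ZMod.val_lt a)
  · intro a _; exact Finset.mem_univ _
  · intro a _; exact ZMod.natCast_rightInverse a
  · intro a ha; exact ZMod.val_cast_of_lt (Finset.mem_range.1 ha)
  · intro a _; rfl

lemma rcnt_lt (m : ℕ) (hm : m ≤ N) :
    ∑ k ∈ Finset.range N, (if k < m then (1:ℚ)/2 else 0) = (m:ℚ)/2 := by
  rw [← Finset.sum_filter]
  have h : (Finset.range N).filter (fun k => k < m) = Finset.range m := by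
    ext k; simp [Finset.mem_filter, Finset.mem_range]; omega
  rw [h, Finset.sum_const, Finset.card_range, nsmul_eq_mul]; ring
lemma rcnt_gt (m : ℕ) (hm : m < N) :
    ∑ k ∈ Finset.range N, (if m < k then (1:ℚ)/2 else 0) = ((N:ℚ) - 1 - m)/2 := by
  rw [← Finset.sum_filter]
  have h : (Finset.range N).filter (fun k => m < k) = Finset.Ico (m+1) N := by
    ext k; simp [Finset.mem_filter, Finset.mem_range, Finset.mem_Ico]; omega
  rw [h, Finset.sum_const, Nat.card_Ico, nsmul_eq_mul, Nat.cast_sub (by omega)]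
  push_cast; ring
lemma rcnt_le (m : ℕ) (hm : m < N) :
    ∑ k ∈ Finset.range N, (if k ≤ m then (1:ℚ)/2 else 0) = ((m:ℚ) + 1)/2 := by
  rw [← Finset.sum_filter]
  have h : (Finset.range N).filter (fun k => k ≤ m) = Finset.range (m+1) := by
    ext k; simp [Finset.mem_filter, Finset.mem_range]; omega
  rw [h, Finset.sum_const, Finset.card_range, nsmul_eq_mul]; push_cast; ring
lemma rcnt_ge (m : ℕ) (hm : m ≤ N) :
    ∑ k ∈ Finset.range N, (if m ≤ k then (1:ℚ)/2 else 0) = ((N:ℚ) - m)/2 := by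
  rw [← Finset.sum_filter]
  have h : (Finset.range N).filter (fun k => m ≤ k) = Finset.Ico m N := by
    ext k; simp [Finset.mem_filter, Finset.mem_range, Finset.mem_Ico]; omega
  rw [h, Finset.sum_const, Nat.card_Ico, nsmul_eq_mul, Nat.cast_sub hm]; ring

/-! ### the two key translation lemmas -/

lemma L1 (p r r' : ZMod N → ℕ) (c : ZMod N)
    (hp : ∀ f : ℕ → ℚ, ∑ j : ZMod N, f (p j) = ∑ k ∈ Finset.range N, f k)
    (hpN : ∀ i, p i < N)
    (hrc : r c = N - 1) (hr'c : r' c = 0)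
    (hstep : ∀ i, i ≠ c → r' i = r i + 1) (hlt : ∀ i, i ≠ c → r i + 1 < N) :
    ∑ i : ZMod N, ∑ j : ZMod N, jj (p i) (p j) (r' i) (r' j)
      = (∑ i : ZMod N, ∑ j : ZMod N, jj (p i) (p j) (r i) (r j))
        + ((N:ℚ) - 1 - 2 * (p c)) := by
  have hNc : r c + 1 = N := by have := hpN c; omega
  set D : ZMod N → ZMod N → ℚ :=
    fun i j => jj (p i) (p j) (r' i) (r' j) - jj (p i) (p j) (r i) (r j) with hD
  have f0 : ∀ i j, i ≠ c → j ≠ c → D i j = 0 := by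
    intro i j hi hj
    simp only [hD, jj, hstep i hi, hstep j hj]
    have := hlt i hi; have := hlt j hj
    split_ifs <;> first | (exfalso; omega) | norm_num
  set R : ZMod N → ℚ :=
    fun i => (if p c < p i then (1:ℚ)/2 else 0) - (if p i < p c then (1:ℚ)/2 else 0) with hR
  have hRc : R c = 0 := by simp [hR]
  have factc : ∀ j, D c j = R j := by
    intro j
    by_cases hj : j = c
    · subst hj; rw [hRc]; simp [hD, jj]
    · have h1 := hstep j hj; have h2 := hlt j hj
      simp only [hD, hR, jj, hr'c, hrc, h1]
      split_ifs <;> first | (exfalso; omega) | norm_num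
  have factr : ∀ i, i ≠ c → D i c = R i := by
    intro i hi
    have h1 := hstep i hi; have h2 := hlt i hi
    simp only [hD, hR, jj, hr'c, hrc, h1]
    split_ifs <;> first | (exfalso; omega) | norm_num
  have hsumR : ∑ i : ZMod N, R i = ((N:ℚ) - 1 - (p c))/2 - (p c)/2 := by
    simp only [hR]
    rw [Finset.sum_sub_distrib,
      hp (fun k => if p c < k then (1:ℚ)/2 else 0),
      hp (fun k => if k < p c then (1:ℚ)/2 else 0),
      rcnt_gt (p c) (hpN c), rcnt_lt (p c) (le_of_lt (hpN c))]
  have key : ∑ i : ZMod N, ∑ j : ZMod N, D i j = (N:ℚ) - 1 - 2 * (p c) := by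
    have inner_c : ∑ j : ZMod N, D c j = ((N:ℚ) - 1 - (p c))/2 - (p c)/2 := by
      rw [Finset.sum_congr rfl (fun j _ => factc j), hsumR]
    have inner_ne : ∀ i, i ≠ c → ∑ j : ZMod N, D i j = R i := by
      intro i hi
      rw [Finset.sum_eq_single_of_mem c (Finset.mem_univ c)
        (fun j _ hj => f0 i j hi hj)]
      exact factr i hi
    rw [Finset.sum_eq_sum_sdiff_singleton_add (Finset.mem_univ c)
      (fun i => ∑ j : ZMod N, D i j)]
    rw [Finset.sum_congr rfl (fun i hi => inner_ne i (by
      simp only [Finset.mem_sdiff, Finset.mem_singleton] at hi; exact hi.2))]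
    have : ∑ i ∈ Finset.univ \ {c}, R i = ∑ i : ZMod N, R i - R c := by
      rw [Finset.sum_eq_sum_sdiff_singleton_add (Finset.mem_univ c) R]; ring
    rw [this, hsumR, hRc, inner_c]; ring
  have expand : ∑ i : ZMod N, ∑ j : ZMod N, D i j
      = (∑ i : ZMod N, ∑ j : ZMod N, jj (p i) (p j) (r' i) (r' j))
        - ∑ i : ZMod N, ∑ j : ZMod N, jj (p i) (p j) (r i) (r j) := by
    rw [← Finset.sum_sub_distrib]
    exact Finset.sum_congr rfl (fun i _ => by rw [← Finset.sum_sub_distrib])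
  rw [expand] at key
  linarith

lemma L2 (p q r r' t t' : ZMod N → ℕ) (c d : ZMod N)
    (hp : ∀ f : ℕ → ℚ, ∑ j : ZMod N, f (p j) = ∑ k ∈ Finset.range N, f k)
    (hq : ∀ f : ℕ → ℚ, ∑ j : ZMod N, f (q j) = ∑ k ∈ Finset.range N, f k)
    (hpN : ∀ i, p i < N) (hqN : ∀ j, q j < N)
    (hrc : r c = N - 1) (hr'c : r' c = 0)
    (hrstep : ∀ i, i ≠ c → r' i = r i + 1) (hrlt : ∀ i, i ≠ c → r i + 1 < N)
    (htd : t d = N - 1) (ht'd : t' d = 0)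
    (htstep : ∀ j, j ≠ d → t' j = t j + 1) (htlt : ∀ j, j ≠ d → t j + 1 < N) :
    ∑ i : ZMod N, ∑ j : ZMod N, jg (p i) (q j) (r' i) (t' j)
      = (∑ i : ZMod N, ∑ j : ZMod N, jg (p i) (q j) (r i) (t j))
        + ((N:ℚ) - 1 - (p c) - (q d)) := by
  have hNc : r c + 1 = N := by have := hpN c; omega
  set D : ZMod N → ZMod N → ℚ :=
    fun i j => jg (p i) (q j) (r' i) (t' j) - jg (p i) (q j) (r i) (t j) with hD
  have f0 : ∀ i j, i ≠ c → j ≠ d → D i j = 0 := by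
    intro i j hi hj
    simp only [hD, jg, hrstep i hi, htstep j hj]
    have := hrlt i hi; have := htlt j hj
    split_ifs <;> first | (exfalso; omega) | norm_num
  have fcd : D c d = 0 := by
    simp only [hD, jg, hr'c, ht'd, hrc, htd]
    split_ifs <;> first | (exfalso; omega) | norm_num
  set E : ZMod N → ℚ :=
    fun j => (if p c ≤ q j then (1:ℚ)/2 else 0) - (if q j < p c then (1:ℚ)/2 else 0) with hE
  set F : ZMod N → ℚ :=
    fun i => (if q d < p i then (1:ℚ)/2 else 0) - (if p i ≤ q d then (1:ℚ)/2 else 0) with hF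
  have fcj : ∀ j, j ≠ d → D c j = E j := by
    intro j hj
    have h1 := htstep j hj; have h2 := htlt j hj
    simp only [hD, hE, jg, hr'c, hrc, h1]
    split_ifs <;> first | (exfalso; omega) | norm_num
  have fid : ∀ i, i ≠ c → D i d = F i := by
    intro i hi
    have h1 := hrstep i hi; have h2 := hrlt i hi
    simp only [hD, hF, jg, ht'd, htd, h1]
    split_ifs <;> first | (exfalso; omega) | norm_num
  have hEF : E d + F c = 0 := by
    simp only [hE, hF]
    split_ifs <;> first | (exfalso; omega) | norm_num
  have hsumE : ∑ j : ZMod N, E j = ((N:ℚ) - (p c))/2 - (p c)/2 := by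
    simp only [hE]
    rw [Finset.sum_sub_distrib,
      hq (fun k => if p c ≤ k then (1:ℚ)/2 else 0),
      hq (fun k => if k < p c then (1:ℚ)/2 else 0),
      rcnt_ge (p c) (le_of_lt (hpN c)), rcnt_lt (p c) (le_of_lt (hpN c))]
  have hsumF : ∑ i : ZMod N, F i = ((N:ℚ) - 1 - (q d))/2 - ((q d:ℚ) + 1)/2 := by
    simp only [hF]
    rw [Finset.sum_sub_distrib,
      hp (fun k => if q d < k then (1:ℚ)/2 else 0),
      hp (fun k => if k ≤ q d then (1:ℚ)/2 else 0),
      rcnt_gt (q d) (hqN d), rcnt_le (q d) (hqN d)]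
  have key : ∑ i : ZMod N, ∑ j : ZMod N, D i j = (N:ℚ) - 1 - (p c) - (q d) := by
    have inner_c : ∑ j : ZMod N, D c j = (∑ j : ZMod N, E j) - E d := by
      rw [Finset.sum_eq_sum_sdiff_singleton_add (Finset.mem_univ d) (fun j => D c j)]
      rw [Finset.sum_congr rfl (fun j hj => fcj j (by
        simp only [Finset.mem_sdiff, Finset.mem_singleton] at hj; exact hj.2))]
      rw [fcd, Finset.sum_eq_sum_sdiff_singleton_add (Finset.mem_univ d) E]
      ring
    have inner_ne : ∀ i, i ≠ c → ∑ j : ZMod N, D i j = F i := by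
      intro i hi
      rw [Finset.sum_eq_single_of_mem d (Finset.mem_univ d)
        (fun j _ hj => f0 i j hi hj)]
      exact fid i hi
    rw [Finset.sum_eq_sum_sdiff_singleton_add (Finset.mem_univ c)
      (fun i => ∑ j : ZMod N, D i j)]
    rw [Finset.sum_congr rfl (fun i hi => inner_ne i (by
      simp only [Finset.mem_sdiff, Finset.mem_singleton] at hi; exact hi.2))]
    have hFsplit : ∑ i ∈ Finset.univ \ {c}, F i = ∑ i : ZMod N, F i - F c := by
      rw [Finset.sum_eq_sum_sdiff_singleton_add (Finset.mem_univ c) F]; ring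
    rw [hFsplit, inner_c, hsumE, hsumF]
    have hFc : F c = - E d := by linarith
    rw [hFc]; ring
  have expand : ∑ i : ZMod N, ∑ j : ZMod N, D i j
      = (∑ i : ZMod N, ∑ j : ZMod N, jg (p i) (q j) (r' i) (t' j))
        - ∑ i : ZMod N, ∑ j : ZMod N, jg (p i) (q j) (r i) (t j) := by
    rw [← Finset.sum_sub_distrib]
    exact Finset.sum_congr rfl (fun i _ => by rw [← Finset.sum_sub_distrib])
  rw [expand] at key
  linarith

/-! ### M in combinatorial form -/

lemma M_eq2 (σ x : Equiv.Perm (ZMod N)) :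
    MaslovGrading N σ x =
      (∑ i : ZMod N, ∑ j : ZMod N, jj i.val j.val (x i).val (x j).val)
      - (∑ i : ZMod N, ∑ j : ZMod N, jg i.val j.val (x i).val (σ j).val)
      - (∑ i : ZMod N, ∑ j : ZMod N, jg i.val j.val (x i).val (σ j).val)
      + (∑ i : ZMod N, ∑ j : ZMod N, jj i.val j.val (σ i).val (σ j).val) + 1 := by
  unfold MaslovGrading
  simp only [Jpt_gen_gen, Jpt_gen_mark, Jpt_mark_gen, Jpt_mark_mark]
  simp only [Finset.sum_add_distrib, Finset.sum_sub_distrib]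
  rw [show (∑ i : ZMod N, ∑ j : ZMod N, jg j.val i.val (x j).val (σ i).val)
      = ∑ i : ZMod N, ∑ j : ZMod N, jg i.val j.val (x i).val (σ j).val from Finset.sum_comm]

/-! ### integrality -/

lemma int_of_sym (F : ZMod N → ZMod N → ℚ) (hsym : ∀ i j, F i j = F j i)
    (h2 : ∀ i j, ∃ k : ℤ, F i j + F i j = (k:ℚ)) (hd : ∀ i, F i i = 0) :
    ∃ m : ℤ, ∑ i : ZMod N, ∑ j : ZMod N, F i j = (m:ℚ) := by
  classical
  suffices h : ∀ s : Finset (ZMod N), ∃ m : ℤ, ∑ i ∈ s, ∑ j ∈ s, F i j = (m:ℚ) from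
    h Finset.univ
  intro s
  induction s using Finset.induction_on with
  | empty => exact ⟨0, by simp⟩
  | @insert a s ha ih =>
    obtain ⟨m, hm⟩ := ih
    choose g hg using h2
    refine ⟨(∑ j ∈ s, g a j) + m, ?_⟩
    rw [Finset.sum_insert ha, Finset.sum_insert ha]
    have hinner : ∀ i ∈ s, ∑ j ∈ insert a s, F i j = F i a + ∑ j ∈ s, F i j :=
      fun i _ => Finset.sum_insert ha
    rw [Finset.sum_congr rfl hinner, Finset.sum_add_distrib, hm, hd a]
    have hswap : ∑ i ∈ s, F i a = ∑ i ∈ s, F a i :=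
      Finset.sum_congr rfl (fun i _ => hsym i a)
    rw [hswap]
    have : (∑ j ∈ s, F a j) + (∑ j ∈ s, F a j) = ((∑ j ∈ s, g a j : ℤ) : ℚ) := by
      rw [← Finset.sum_add_distrib]
      rw [Finset.sum_congr rfl (fun j _ => hg a j)]
      push_cast; rfl
    push_cast at this ⊢
    linarith [this]

lemma int_double (F : ZMod N → ZMod N → ℚ)
    (h : ∀ i j, ∃ k : ℤ, F i j + F i j = (k:ℚ)) :
    ∃ m : ℤ, (∑ i : ZMod N, ∑ j : ZMod N, F i j) + (∑ i : ZMod N, ∑ j : ZMod N, F i j)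
      = (m:ℚ) := by
  choose g hg using h
  refine ⟨∑ i : ZMod N, ∑ j : ZMod N, g i j, ?_⟩
  rw [← Finset.sum_add_distrib]
  rw [Finset.sum_congr rfl (fun i _ => by
    rw [← Finset.sum_add_distrib, Finset.sum_congr rfl (fun j _ => hg i j)])]
  push_cast; rfl

lemma M_integral (σ x : Equiv.Perm (ZMod N)) :
    ∃ m : ℤ, MaslovGrading N σ x = (m:ℚ) := by
  obtain ⟨mA, hA⟩ := int_of_sym (fun i j => jj i.val j.val (x i).val (x j).val)
    (fun i j => jj_comm _ _ _ _) (fun i j => jj_two _ _ _ _)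
    (fun i => jj_diag _ _ _)
  obtain ⟨mD, hD⟩ := int_of_sym (fun i j => jj i.val j.val (σ i).val (σ j).val)
    (fun i j => jj_comm _ _ _ _) (fun i j => jj_two _ _ _ _)
    (fun i => jj_diag _ _ _)
  obtain ⟨mB, hB⟩ := int_double (fun i j => jg i.val j.val (x i).val (σ j).val)
    (fun i j => jg_two _ _ _ _)
  refine ⟨mA - mB + mD + 1, ?_⟩
  rw [M_eq2]
  push_cast
  linarith

/-! ### ZMod val helpers -/

lemma neg_one_val : (-1 : ZMod N).val = N - 1 := by
  have hN1 : 1 ≤ N := Nat.one_le_iff_ne_zero.2 (NeZero.ne N)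
  have h : (-1 : ZMod N) = ((N - 1 : ℕ) : ZMod N) := by
    rw [Nat.cast_sub hN1, Nat.cast_one, ZMod.natCast_self, zero_sub]
  rw [h, ZMod.val_cast_of_lt (by omega)]

lemma val_lt_pred {z : ZMod N} (hz : z ≠ -1) : z.val + 1 < N := by
  have h1 : z.val < N := ZMod.val_lt z
  have h2 : z.val ≠ N - 1 := fun h =>
    hz (ZMod.val_injective N (by rw [h, neg_one_val]))
  have hN1 : 1 ≤ N := Nat.one_le_iff_ne_zero.2 (NeZero.ne N)
  omega

lemma val_add_one {z : ZMod N} (hz : z ≠ -1) : (z + 1).val = z.val + 1 := by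
  have h2 := val_lt_pred hz
  calc (z + 1).val = (((z.val : ℕ) : ZMod N) + 1).val := by
        rw [ZMod.natCast_rightInverse z]
    _ = (((z.val + 1 : ℕ)) : ZMod N).val := by push_cast; ring_nf
    _ = z.val + 1 := ZMod.val_cast_of_lt h2

/-! ### vertical step -/

lemma stepV (σ x σ₁ x₁ : Equiv.Perm (ZMod N))
    (h1 : ∀ i, σ₁ i = σ i + 1) (h2 : ∀ i, x₁ i = x i + 1) :
    MaslovGrading N σ₁ x₁ = MaslovGrading N σ x := by
  have hval : ∀ f : ℕ → ℚ, ∑ j : ZMod N, f (ZMod.val j) = ∑ k ∈ Finset.range N, f k :=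
    sum_val_eq
  have hvalN : ∀ i : ZMod N, (ZMod.val i) < N := ZMod.val_lt
  set c : ZMod N := x.symm (-1) with hc
  set d : ZMod N := σ.symm (-1) with hd
  have hxc : x c = -1 := x.apply_symm_apply _
  have hσd : σ d = -1 := σ.apply_symm_apply _
  have hxcv : (x c).val = N - 1 := by rw [hxc, neg_one_val]
  have hσdv : (σ d).val = N - 1 := by rw [hσd, neg_one_val]
  have hx1c : (x₁ c).val = 0 := by rw [h2, hxc, neg_add_cancel, ZMod.val_zero]
  have hσ1d : (σ₁ d).val = 0 := by rw [h1, hσd, neg_add_cancel, ZMod.val_zero]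
  have hxne : ∀ i, i ≠ c → x i ≠ -1 := fun i hi h =>
    hi (by rw [hc, ← h, Equiv.symm_apply_apply])
  have hσne : ∀ i, i ≠ d → σ i ≠ -1 := fun i hi h =>
    hi (by rw [hd, ← h, Equiv.symm_apply_apply])
  have hxstep : ∀ i, i ≠ c → (x₁ i).val = (x i).val + 1 :=
    fun i hi => by rw [h2]; exact val_add_one (hxne i hi)
  have hσstep : ∀ i, i ≠ d → (σ₁ i).val = (σ i).val + 1 :=
    fun i hi => by rw [h1]; exact val_add_one (hσne i hi)
  have hxlt : ∀ i, i ≠ c → (x i).val + 1 < N := fun i hi => val_lt_pred (hxne i hi)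
  have hσlt : ∀ i, i ≠ d → (σ i).val + 1 < N := fun i hi => val_lt_pred (hσne i hi)
  have hA : (∑ i : ZMod N, ∑ j : ZMod N, jj i.val j.val (x₁ i).val (x₁ j).val)
      = (∑ i : ZMod N, ∑ j : ZMod N, jj i.val j.val (x i).val (x j).val)
        + ((N:ℚ) - 1 - 2 * (c.val : ℚ)) :=
    L1 ZMod.val (fun i => (x i).val) (fun i => (x₁ i).val) c hval hvalN hxcv hx1c
      hxstep hxlt
  have hDD : (∑ i : ZMod N, ∑ j : ZMod N, jj i.val j.val (σ₁ i).val (σ₁ j).val)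
      = (∑ i : ZMod N, ∑ j : ZMod N, jj i.val j.val (σ i).val (σ j).val)
        + ((N:ℚ) - 1 - 2 * (d.val : ℚ)) :=
    L1 ZMod.val (fun i => (σ i).val) (fun i => (σ₁ i).val) d hval hvalN hσdv hσ1d
      hσstep hσlt
  have hB : (∑ i : ZMod N, ∑ j : ZMod N, jg i.val j.val (x₁ i).val (σ₁ j).val)
      = (∑ i : ZMod N, ∑ j : ZMod N, jg i.val j.val (x i).val (σ j).val)
        + ((N:ℚ) - 1 - (c.val : ℚ) - (d.val : ℚ)) :=
    L2 ZMod.val ZMod.val (fun i => (x i).val) (fun i => (x₁ i).val)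
      (fun j => (σ j).val) (fun j => (σ₁ j).val) c d hval hval hvalN hvalN
      hxcv hx1c hxstep hxlt hσdv hσ1d hσstep hσlt
  rw [M_eq2, M_eq2, hA, hB, hDD]
  ring

/-! ### horizontal step -/

lemma stepH (σ x σ₁ x₁ : Equiv.Perm (ZMod N))
    (h1 : ∀ i, σ₁ i = σ (i - 1)) (h2 : ∀ i, x₁ i = x (i - 1)) :
    MaslovGrading N σ₁ x₁ = MaslovGrading N σ x := by
  have hval : ∀ f : ℕ → ℚ, ∑ j : ZMod N, f (ZMod.val j) = ∑ k ∈ Finset.range N, f k :=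
    sum_val_eq
  have hvalN : ∀ i : ZMod N, (ZMod.val i) < N := ZMod.val_lt
  have hpx : ∀ f : ℕ → ℚ, ∑ j : ZMod N, f ((x j).val) = ∑ k ∈ Finset.range N, f k := by
    intro f
    calc ∑ j : ZMod N, f ((x j).val)
        = ∑ j : ZMod N, f (ZMod.val j) := Equiv.sum_comp x (fun z => f (ZMod.val z))
      _ = _ := sum_val_eq f
  have hpσ : ∀ f : ℕ → ℚ, ∑ j : ZMod N, f ((σ j).val) = ∑ k ∈ Finset.range N, f k := by
    intro f
    calc ∑ j : ZMod N, f ((σ j).val)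
        = ∑ j : ZMod N, f (ZMod.val j) := Equiv.sum_comp σ (fun z => f (ZMod.val z))
      _ = _ := sum_val_eq f
  have hxv : ∀ i : ZMod N, (x i).val < N := fun i => ZMod.val_lt _
  have hσv : ∀ i : ZMod N, (σ i).val < N := fun i => ZMod.val_lt _
  have hm1 : (ZMod.val (-1 : ZMod N)) = N - 1 := neg_one_val
  have h0 : (ZMod.val ((-1 : ZMod N) + 1)) = 0 := by rw [neg_add_cancel, ZMod.val_zero]
  have hstep : ∀ i : ZMod N, i ≠ -1 → (ZMod.val (i + 1)) = ZMod.val i + 1 :=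
    fun i hi => val_add_one hi
  have hlt : ∀ i : ZMod N, i ≠ -1 → ZMod.val i + 1 < N := fun i hi => val_lt_pred hi
  have reidx : ∀ g : ZMod N → ZMod N → ℚ,
      ∑ i : ZMod N, ∑ j : ZMod N, g i j
        = ∑ i : ZMod N, ∑ j : ZMod N, g (i + 1) (j + 1) := by
    intro g
    rw [← Equiv.sum_comp (Equiv.addRight (1 : ZMod N)) (fun i => ∑ j : ZMod N, g i j)]
    refine Finset.sum_congr rfl (fun i _ => ?_)
    exact (Equiv.sum_comp (Equiv.addRight (1 : ZMod N))
      (fun j => g (Equiv.addRight (1 : ZMod N) i) j)).symm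
  have hx : ∀ i : ZMod N, x₁ (i + 1) = x i := fun i => by
    rw [h2, add_sub_cancel_right]
  have hσs : ∀ i : ZMod N, σ₁ (i + 1) = σ i := fun i => by
    rw [h1, add_sub_cancel_right]
  have hA : (∑ i : ZMod N, ∑ j : ZMod N, jj i.val j.val (x₁ i).val (x₁ j).val)
      = (∑ i : ZMod N, ∑ j : ZMod N, jj i.val j.val (x i).val (x j).val)
        + ((N:ℚ) - 1 - 2 * (((x (-1)).val : ℕ) : ℚ)) := by
    calc (∑ i : ZMod N, ∑ j : ZMod N, jj i.val j.val (x₁ i).val (x₁ j).val)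
        = ∑ i : ZMod N, ∑ j : ZMod N,
            jj (i+1).val (j+1).val (x₁ (i+1)).val (x₁ (j+1)).val :=
          reidx (fun i j => jj i.val j.val (x₁ i).val (x₁ j).val)
      _ = ∑ i : ZMod N, ∑ j : ZMod N,
            jj ((x i).val) ((x j).val) ((i+1).val) ((j+1).val) := by
          refine Finset.sum_congr rfl fun i _ => Finset.sum_congr rfl fun j _ => ?_
          rw [hx i, hx j, jj_swap]
      _ = (∑ i : ZMod N, ∑ j : ZMod N, jj ((x i).val) ((x j).val) i.val j.val)
            + ((N:ℚ) - 1 - 2 * (((x (-1)).val : ℕ) : ℚ)) :=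
          L1 (fun i => (x i).val) ZMod.val (fun i => (i+1).val) (-1) hpx hxv hm1 h0
            hstep hlt
      _ = (∑ i : ZMod N, ∑ j : ZMod N, jj i.val j.val (x i).val (x j).val)
            + ((N:ℚ) - 1 - 2 * (((x (-1)).val : ℕ) : ℚ)) := by
          congr 1
          exact Finset.sum_congr rfl fun i _ => Finset.sum_congr rfl fun j _ =>
            jj_swap _ _ _ _
  have hDD : (∑ i : ZMod N, ∑ j : ZMod N, jj i.val j.val (σ₁ i).val (σ₁ j).val)
      = (∑ i : ZMod N, ∑ j : ZMod N, jj i.val j.val (σ i).val (σ j).val)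
        + ((N:ℚ) - 1 - 2 * (((σ (-1)).val : ℕ) : ℚ)) := by
    calc (∑ i : ZMod N, ∑ j : ZMod N, jj i.val j.val (σ₁ i).val (σ₁ j).val)
        = ∑ i : ZMod N, ∑ j : ZMod N,
            jj (i+1).val (j+1).val (σ₁ (i+1)).val (σ₁ (j+1)).val :=
          reidx (fun i j => jj i.val j.val (σ₁ i).val (σ₁ j).val)
      _ = ∑ i : ZMod N, ∑ j : ZMod N,
            jj ((σ i).val) ((σ j).val) ((i+1).val) ((j+1).val) := by
          refine Finset.sum_congr rfl fun i _ => Finset.sum_congr rfl fun j _ => ?_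
          rw [hσs i, hσs j, jj_swap]
      _ = (∑ i : ZMod N, ∑ j : ZMod N, jj ((σ i).val) ((σ j).val) i.val j.val)
            + ((N:ℚ) - 1 - 2 * (((σ (-1)).val : ℕ) : ℚ)) :=
          L1 (fun i => (σ i).val) ZMod.val (fun i => (i+1).val) (-1) hpσ hσv hm1 h0
            hstep hlt
      _ = (∑ i : ZMod N, ∑ j : ZMod N, jj i.val j.val (σ i).val (σ j).val)
            + ((N:ℚ) - 1 - 2 * (((σ (-1)).val : ℕ) : ℚ)) := by
          congr 1
          exact Finset.sum_congr rfl fun i _ => Finset.sum_congr rfl fun j _ =>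
            jj_swap _ _ _ _
  have hB : (∑ i : ZMod N, ∑ j : ZMod N, jg i.val j.val (x₁ i).val (σ₁ j).val)
      = (∑ i : ZMod N, ∑ j : ZMod N, jg i.val j.val (x i).val (σ j).val)
        + ((N:ℚ) - 1 - (((x (-1)).val : ℕ) : ℚ) - (((σ (-1)).val : ℕ) : ℚ)) := by
    calc (∑ i : ZMod N, ∑ j : ZMod N, jg i.val j.val (x₁ i).val (σ₁ j).val)
        = ∑ i : ZMod N, ∑ j : ZMod N,
            jg (i+1).val (j+1).val (x₁ (i+1)).val (σ₁ (j+1)).val :=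
          reidx (fun i j => jg i.val j.val (x₁ i).val (σ₁ j).val)
      _ = ∑ i : ZMod N, ∑ j : ZMod N,
            jg ((x i).val) ((σ j).val) ((i+1).val) ((j+1).val) := by
          refine Finset.sum_congr rfl fun i _ => Finset.sum_congr rfl fun j _ => ?_
          rw [hx i, hσs j, jg_swap]
      _ = (∑ i : ZMod N, ∑ j : ZMod N, jg ((x i).val) ((σ j).val) i.val j.val)
            + ((N:ℚ) - 1 - (((x (-1)).val : ℕ) : ℚ) - (((σ (-1)).val : ℕ) : ℚ)) :=
          L2 (fun i => (x i).val) (fun j => (σ j).val) ZMod.val (fun i => (i+1).val)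
            ZMod.val (fun j => (j+1).val) (-1) (-1) hpx hpσ hxv hσv hm1 h0 hstep hlt
            hm1 h0 hstep hlt
      _ = (∑ i : ZMod N, ∑ j : ZMod N, jg i.val j.val (x i).val (σ j).val)
            + ((N:ℚ) - 1 - (((x (-1)).val : ℕ) : ℚ) - (((σ (-1)).val : ℕ) : ℚ)) := by
          congr 1
          exact Finset.sum_congr rfl fun i _ => Finset.sum_congr rfl fun j _ =>
            jg_swap _ _ _ _
  rw [M_eq2, M_eq2, hA, hB, hDD]
  ring

/-! ### iterated shifts and the main invariance -/

lemma vshift : ∀ (n : ℕ) (σ x σ' x' : Equiv.Perm (ZMod N)),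
    (∀ i, σ' i = σ i + (n : ZMod N)) → (∀ i, x' i = x i + (n : ZMod N)) →
    MaslovGrading N σ' x' = MaslovGrading N σ x := by
  intro n
  induction n with
  | zero =>
    intro σ x σ' x' h1 h2
    have hσ : σ' = σ := Equiv.ext (fun i => by rw [h1]; simp)
    have hx : x' = x := Equiv.ext (fun i => by rw [h2]; simp)
    rw [hσ, hx]
  | succ n ih =>
    intro σ x σ' x' h1 h2
    have hm := ih σ x (σ.trans (Equiv.addRight (n : ZMod N)))
      (x.trans (Equiv.addRight (n : ZMod N))) (fun i => rfl) (fun i => rfl)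
    rw [← hm]
    apply stepV _ _ σ' x'
    · intro i; rw [h1]; show σ i + ((n+1 : ℕ) : ZMod N) = σ i + (n : ZMod N) + 1
      push_cast; ring
    · intro i; rw [h2]; show x i + ((n+1 : ℕ) : ZMod N) = x i + (n : ZMod N) + 1
      push_cast; ring

lemma hshift : ∀ (n : ℕ) (σ x σ' x' : Equiv.Perm (ZMod N)),
    (∀ i, σ' i = σ (i - (n : ZMod N))) → (∀ i, x' i = x (i - (n : ZMod N))) →
    MaslovGrading N σ' x' = MaslovGrading N σ x := by
  intro n
  induction n with
  | zero =>
    intro σ x σ' x' h1 h2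
    have hσ : σ' = σ := Equiv.ext (fun i => by rw [h1]; simp)
    have hx : x' = x := Equiv.ext (fun i => by rw [h2]; simp)
    rw [hσ, hx]
  | succ n ih =>
    intro σ x σ' x' h1 h2
    have hm := ih σ x ((Equiv.subRight (n : ZMod N)).trans σ)
      ((Equiv.subRight (n : ZMod N)).trans x) (fun i => rfl) (fun i => rfl)
    rw [← hm]
    apply stepH _ _ σ' x'
    · intro i; rw [h1]
      show σ (i - ((n+1 : ℕ) : ZMod N)) = σ ((i - 1) - (n : ZMod N))
      congr 1; push_cast; ring
    · intro i; rw [h2]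
      show x (i - ((n+1 : ℕ) : ZMod N)) = x ((i - 1) - (n : ZMod N))
      congr 1; push_cast; ring

lemma M_invariant (σO x : Equiv.Perm (ZMod N)) (s t : ZMod N)
    (σO' x' : Equiv.Perm (ZMod N))
    (h1 : ∀ i, σO' i = σO (i - s) + t) (h3 : ∀ i, x' i = x (i - s) + t) :
    MaslovGrading N σO' x' = MaslovGrading N σO x := by
  have hstep1 : MaslovGrading N σO' x'
      = MaslovGrading N ((Equiv.subRight s).trans σO) ((Equiv.subRight s).trans x) := by
    apply vshift t.val
    · intro i
      rw [show (((ZMod.val t : ℕ)) : ZMod N) = t from ZMod.natCast_rightInverse t]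
      exact h1 i
    · intro i
      rw [show (((ZMod.val t : ℕ)) : ZMod N) = t from ZMod.natCast_rightInverse t]
      exact h3 i
  rw [hstep1]
  apply hshift s.val
  · intro i
    rw [show (((ZMod.val s : ℕ)) : ZMod N) = s from ZMod.natCast_rightInverse s]
    rfl
  · intro i
    rw [show (((ZMod.val s : ℕ)) : ZMod N) = s from ZMod.natCast_rightInverse s]
    rfl

end GridAux

/-- For every generator `x` of a grid diagram, `M(x)` is an
integer; moreover `M` is invariant under cyclic translation of the diagram. -/
theorem absolute_maslov_integral_and_translation_invariant
    (N : ℕ) [NeZero N] (hN : 2 ≤ N)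
    (σO σX : GridGen N) (hσ : ∀ i : ZMod N, σO i ≠ σX i) (x : GridGen N) :
    (∃ m : ℤ, MaslovGrading N σO x = (m : ℚ)) ∧
      ∀ (s t : ZMod N) (σO' σX' x' : GridGen N),
        (∀ i : ZMod N, σO' i = σO (i - s) + t) →
        (∀ i : ZMod N, σX' i = σX (i - s) + t) →
        (∀ i : ZMod N, x' i = x (i - s) + t) →
        MaslovGrading N σO' x' = MaslovGrading N σO x := by
  constructor
  · exact GridAux.M_integral σO x
  · intro s t σO' σX' x' h1 _h2 h3
    exact GridAux.M_invariant σO x s t σO' x' h1 h3
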